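/- Let q be a prime power, let m, n > 1 be relatively prime integers, let m₁ be the smallest prime divisor of m and n₁ the smallest prime divisor of n. Suppose there exists a monic irreducible polynomial f(x) ∈ F_{q^{m/m₁}}[x] of degree m₁ such that f(x) − f(0) has all its coefficients in F_q and f(0) ∈ 𝓕_{m/m₁}(q). Then there exist a polynomial φ(x,y) ∈ F_q[x,y] with deg_x φ = m₁ and 0 < deg_y φ < n₁, an integer k, an element α ∈ 𝓕_m(q) with σ^k(α) ≠ α, and an element β ∈ 𝓕_n(q), such that φ(σ^k(α), β) = φ(α, β). -/

import Mathlib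

open Polynomial

/-- `Fcal q m` is the set `𝓕_m(q)` of elements generating `𝔽_{q^m}` over `𝔽_q`. -/
def Fcal (q m : ℕ) {K : Type*} [Monoid K] : Set K :=
  {α | α ^ q ^ m = α ∧ ∀ l : ℕ, 0 < l → α ^ q ^ l = α → m ∣ l}

open IntermediateField

section Aux

variable {F : Type*} [Field F] [Fintype F] {q : ℕ}
  (σ : AlgebraicClosure F ≃ₐ[F] AlgebraicClosure F)

lemma aux_pow_apply (hσ : ∀ x, σ x = x ^ q) (s : ℕ) (x : AlgebraicClosure F) :
    (σ ^ s) x = x ^ q ^ s := by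
  induction s with
  | zero => simp
  | succ t ih =>
    rw [pow_succ, AlgEquiv.mul_apply, hσ x, map_pow, ih, ← pow_mul, ← pow_succ]

lemma aux_mem_fixed (hσ : ∀ x, σ x = x ^ q) (s : ℕ) (x : AlgebraicClosure F) :
    x ∈ IntermediateField.fixedField (Subgroup.zpowers (σ ^ s)) ↔ x ^ q ^ s = x := by
  constructor
  · intro h
    have := h ⟨σ ^ s, Subgroup.mem_zpowers _⟩
    rw [Subgroup.mk_smul, AlgEquiv.smul_def, aux_pow_apply σ hσ] at this
    exact this
  · intro h g
    obtain ⟨k, hk⟩ := g.2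
    have base : (σ ^ s) x = x := by rw [aux_pow_apply σ hσ]; exact h
    have hnat : ∀ t : ℕ, ((σ ^ s) ^ t) x = x := by
      intro t
      induction t with
      | zero => simp
      | succ u ih => rw [pow_succ, AlgEquiv.mul_apply, base, ih]
    show (g : AlgebraicClosure F ≃ₐ[F] AlgebraicClosure F) x = x
    rw [← hk]
    show ((σ ^ s) ^ k) x = x
    rcases k with t | t
    · simpa using hnat t
    · rw [zpow_negSucc]
      have := hnat (t + 1)
      conv_lhs => rw [← this]
      exact ((σ ^ s) ^ (t + 1)).symm_apply_apply x

end Aux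

section Aux2
variable {F : Type*} [Field F] [Fintype F] {q : ℕ}
  (σ : AlgebraicClosure F ≃ₐ[F] AlgebraicClosure F)

lemma aux_q2 (hq : Fintype.card F = q) : 2 ≤ q := hq ▸ Fintype.one_lt_card

lemma aux_fixed_set_eq (hq : Fintype.card F = q) (hσ : ∀ x, σ x = x ^ q)
    (l : ℕ) (hl : 0 < l) :
    (IntermediateField.fixedField (Subgroup.zpowers (σ ^ l)) : Set (AlgebraicClosure F)) =
      (X ^ q ^ l - X : F[X]).rootSet (AlgebraicClosure F) := by
  have hq2 : 2 ≤ q := aux_q2 hq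
  have hne : (X ^ q ^ l - X : F[X]) ≠ 0 := by
    subst hq
    exact FiniteField.X_pow_card_pow_sub_X_ne_zero _ hl.ne' Fintype.one_lt_card
  ext x
  rw [SetLike.mem_coe, aux_mem_fixed σ hσ, Polynomial.mem_rootSet]
  simp only [map_sub, map_pow, Polynomial.aeval_X, hne, ne_eq, not_false_iff, true_and]
  rw [sub_eq_zero]

lemma aux_fixed_finite (hq : Fintype.card F = q) (hσ : ∀ x, σ x = x ^ q)
    (l : ℕ) (hl : 0 < l) :
    (IntermediateField.fixedField (Subgroup.zpowers (σ ^ l)) : Set (AlgebraicClosure F)).Finite := by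
  rw [aux_fixed_set_eq σ hq hσ l hl]
  exact Set.toFinite _

lemma aux_fixed_natCard (hq : Fintype.card F = q) (hσ : ∀ x, σ x = x ^ q)
    (l : ℕ) (hl : 0 < l) :
    Nat.card (IntermediateField.fixedField (Subgroup.zpowers (σ ^ l))) = q ^ l := by
  have hq2 : 2 ≤ q := aux_q2 hq
  have hsep : (X ^ q ^ l - X : F[X]).Separable := by
    obtain ⟨p, hchar⟩ := CharP.exists F
    haveI := hchar
    haveI : Fact p.Prime := ⟨(CharP.char_is_prime F p)⟩
    obtain ⟨n, hn⟩ := FiniteField.card F p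
    have hpq : p ∣ q ^ l := by
      rcases hn with ⟨hp, hcardF⟩
      rw [hq] at hcardF
      exact dvd_pow (hcardF ▸ dvd_pow_self p n.ne_zero) hl.ne'
    exact galois_poly_separable p _ hpq
  have hsplit : (((X ^ q ^ l - X : F[X])).map (algebraMap F (AlgebraicClosure F))).Splits :=
    IsAlgClosed.splits _
  have hdeg : (X ^ q ^ l - X : F[X]).natDegree = q ^ l := by
    subst hq
    exact FiniteField.X_pow_card_pow_sub_X_natDegree_eq _ hl.ne' Fintype.one_lt_card
  have hcard := Polynomial.card_rootSet_eq_natDegree (K := AlgebraicClosure F) hsep hsplit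
  have h2 := Nat.card_congr (Equiv.setCongr (aux_fixed_set_eq σ hq hσ l hl))
  exact h2.trans (by rw [Nat.card_eq_fintype_card, hcard, hdeg])

end Aux2

section Aux3
variable {F : Type*} [Field F] [Fintype F] {q : ℕ}
  (σ : AlgebraicClosure F ≃ₐ[F] AlgebraicClosure F)

lemma aux_fixed_finrank (hq : Fintype.card F = q) (hσ : ∀ x, σ x = x ^ q)
    (l : ℕ) (hl : 0 < l) :
    Module.finrank F (IntermediateField.fixedField (Subgroup.zpowers (σ ^ l))) = l := by
  haveI : Finite (IntermediateField.fixedField (Subgroup.zpowers (σ ^ l))) :=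
    (aux_fixed_finite σ hq hσ l hl).to_subtype
  haveI : FiniteDimensional F (IntermediateField.fixedField (Subgroup.zpowers (σ ^ l))) :=
    Module.Finite.of_finite
  haveI := Fintype.ofFinite (IntermediateField.fixedField (Subgroup.zpowers (σ ^ l)))
  have h1 : Fintype.card (IntermediateField.fixedField (Subgroup.zpowers (σ ^ l))) =
      q ^ Module.finrank F (IntermediateField.fixedField (Subgroup.zpowers (σ ^ l))) := by
    rw [← hq]; exact Module.card_eq_pow_finrank
  have h2 := aux_fixed_natCard σ hq hσ l hl
  rw [Nat.card_eq_fintype_card, h1] at h2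
  exact Nat.pow_right_injective (aux_q2 hq) h2

lemma aux_finrank_dvd {A B : IntermediateField F (AlgebraicClosure F)} (h : A ≤ B) :
    Module.finrank F A ∣ Module.finrank F B :=
  ⟨IntermediateField.relfinrank A B, (IntermediateField.finrank_bot_mul_relfinrank h).symm⟩

/-- L1 -/
lemma aux_pow_iff (hq : Fintype.card F = q) (hσ : ∀ x, σ x = x ^ q)
    (x : AlgebraicClosure F) (l : ℕ) :
    x ^ q ^ l = x ↔ Module.finrank F F⟮x⟯ ∣ l := by
  have hx : IsIntegral F x := Algebra.IsIntegral.isIntegral x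
  haveI : FiniteDimensional F F⟮x⟯ := IntermediateField.adjoin.finiteDimensional hx
  rcases Nat.eq_zero_or_pos l with rfl | hl
  · simp
  constructor
  · intro h
    have hmem : x ∈ IntermediateField.fixedField (Subgroup.zpowers (σ ^ l)) :=
      (aux_mem_fixed σ hσ l x).mpr h
    have hle : F⟮x⟯ ≤ IntermediateField.fixedField (Subgroup.zpowers (σ ^ l)) :=
      IntermediateField.adjoin_simple_le_iff.mpr hmem
    have := aux_finrank_dvd hle
    rwa [aux_fixed_finrank σ hq hσ l hl] at this
  · rintro ⟨c, rfl⟩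
    clear hl
    haveI : Finite F⟮x⟯ := Module.finite_of_finite F
    haveI := Fintype.ofFinite F⟮x⟯
    have hcard : Fintype.card F⟮x⟯ = q ^ Module.finrank F F⟮x⟯ := by
      rw [← hq]; exact Module.card_eq_pow_finrank
    have hgen : (IntermediateField.AdjoinSimple.gen F x) ^ q ^ Module.finrank F F⟮x⟯
        = IntermediateField.AdjoinSimple.gen F x := by
      rw [← hcard]; exact FiniteField.pow_card _
    have hx1 : x ^ q ^ Module.finrank F F⟮x⟯ = x := by
      have := congrArg (algebraMap F⟮x⟯ (AlgebraicClosure F)) hgen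
      rwa [map_pow] at this
    induction c with
    | zero => simp
    | succ t iht =>
      rw [Nat.mul_succ, pow_add, pow_mul, iht, hx1]

end Aux3

section Aux4
variable {F : Type*} [Field F] [Fintype F] {q : ℕ}
  (σ : AlgebraicClosure F ≃ₐ[F] AlgebraicClosure F)

lemma aux_exists_gen (hq : Fintype.card F = q) (hσ : ∀ x, σ x = x ^ q)
    (l : ℕ) (hl : 0 < l) :
    ∃ β : AlgebraicClosure F, Module.finrank F F⟮β⟯ = l := by
  set E := IntermediateField.fixedField (Subgroup.zpowers (σ ^ l)) with hE
  haveI : Finite E := (aux_fixed_finite σ hq hσ l hl).to_subtype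
  obtain ⟨g, hg⟩ := IsCyclic.exists_generator (α := Eˣ)
  refine ⟨((g : E) : AlgebraicClosure F), ?_⟩
  have heq : F⟮((g : E) : AlgebraicClosure F)⟯ = E := by
    apply le_antisymm
    · exact IntermediateField.adjoin_simple_le_iff.mpr (g : E).2
    · intro x hx
      rcases eq_or_ne x 0 with rfl | hx0
      · exact zero_mem _
      · set u : Eˣ := Units.mk0 ⟨x, hx⟩ (by simp only [ne_eq, Subtype.ext_iff]; exact hx0) with hu
        have := hg u
        rw [← mem_powers_iff_mem_zpowers] at this
        obtain ⟨k, hk⟩ := this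
        have hxk : x = ((g : E) : AlgebraicClosure F) ^ k := by
          have : ((u : E) : AlgebraicClosure F) = x := rfl
          rw [← this, ← hk]
          push_cast
          rfl
        rw [hxk]
        exact pow_mem (IntermediateField.mem_adjoin_simple_self F _) k
  rw [heq]
  exact aux_fixed_finrank σ hq hσ l hl

end Aux4

section Aux5
variable {F : Type*} [Field F] [Fintype F] {q : ℕ}
  (σ : AlgebraicClosure F ≃ₐ[F] AlgebraicClosure F)

lemma aux_Fcal_iff (hq : Fintype.card F = q) (hσ : ∀ x, σ x = x ^ q)
    (x : AlgebraicClosure F) (r : ℕ) (hr : 0 < r) :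
    x ∈ (Fcal q r : Set (AlgebraicClosure F)) ↔ Module.finrank F F⟮x⟯ = r := by
  have hx : IsIntegral F x := Algebra.IsIntegral.isIntegral x
  haveI : FiniteDimensional F F⟮x⟯ := IntermediateField.adjoin.finiteDimensional hx
  constructor
  · rintro ⟨h1, h2⟩
    have hd1 : Module.finrank F F⟮x⟯ ∣ r := (aux_pow_iff σ hq hσ x r).mp h1
    have hd2 : r ∣ Module.finrank F F⟮x⟯ :=
      h2 _ Module.finrank_pos ((aux_pow_iff σ hq hσ x _).mpr dvd_rfl)
    exact Nat.dvd_antisymm hd1 hd2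
  · intro h
    exact ⟨(aux_pow_iff σ hq hσ x r).mpr (h ▸ dvd_rfl),
      fun l hl hxl => h ▸ ((aux_pow_iff σ hq hσ x l).mp hxl)⟩

end Aux5

/-- (Proposition, (iv) ⟹ (i).)  If there is a monic irreducible
`f ∈ 𝔽_{q^{m/m₁}}[x]` of degree `m₁` with `f - f(0)` having coefficients in `𝔽_q` and
`f(0) ∈ 𝓕_{m/m₁}(q)`, then there are `φ(x,y) ∈ 𝔽_q[x,y]` with `deg_x φ = m₁`,
`0 < deg_y φ < n₁`, an integer `k`, `α ∈ 𝓕_m(q)` with `σ^k(α) ≠ α`, and `β ∈ 𝓕_n(q)`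
with `φ(σ^k(α), β) = φ(α, β)`.  Here `𝔽_{q^{m/m₁}}` is realized as the fixed field of
the cyclic group generated by `σ^{m/m₁}` inside the algebraic closure. -/
theorem stmt_16 {F : Type*} [Field F] [Fintype F] (q : ℕ) (hq : Fintype.card F = q)
    (σ : AlgebraicClosure F ≃ₐ[F] AlgebraicClosure F) (hσ : ∀ x, σ x = x ^ q)
    (m n m₁ n₁ : ℕ) (hm : 1 < m) (hn : 1 < n) (hmn : Nat.Coprime m n)
    (hm₁ : m₁ = m.minFac) (hn₁ : n₁ = n.minFac)
    (f : Polynomial (IntermediateField.fixedField (Subgroup.zpowers (σ ^ (m / m₁)))))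
    (hfm : f.Monic) (hfi : Irreducible f) (hfd : f.natDegree = m₁)
    (hcoeff : ∀ i : ℕ, ∃ a : F,
      (((f - Polynomial.C (f.eval 0)).coeff i : _) : AlgebraicClosure F) =
        algebraMap F (AlgebraicClosure F) a)
    (hf0 : ((f.eval 0 : _) : AlgebraicClosure F) ∈
      (Fcal q (m / m₁) : Set (AlgebraicClosure F))) :
    ∃ φ : MvPolynomial (Fin 2) F,
      φ.degreeOf 0 = m₁ ∧ 0 < φ.degreeOf 1 ∧ φ.degreeOf 1 < n₁ ∧
      ∃ k : ℤ, ∃ α ∈ (Fcal q m : Set (AlgebraicClosure F)),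
        (σ ^ k) α ≠ α ∧
        ∃ β ∈ (Fcal q n : Set (AlgebraicClosure F)),
          MvPolynomial.aeval ![(σ ^ k) α, β] φ = MvPolynomial.aeval ![α, β] φ := by
  classical
  revert hf0 hcoeff hfd hfi hfm f
  set s := m / m₁ with hs
  set K := IntermediateField.fixedField (Subgroup.zpowers (σ ^ s)) with hK
  intro f hfm hfi hfd hcoeff hf0
  -- basic numerics
  have hm₁p : Nat.Prime m₁ := hm₁ ▸ Nat.minFac_prime (by omega)
  have hm₁dvd : m₁ ∣ m := hm₁ ▸ Nat.minFac_dvd m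
  have hs_pos : 0 < s := Nat.div_pos (Nat.le_of_dvd (by omega) hm₁dvd) hm₁p.pos
  have hsm : s * m₁ = m := Nat.div_mul_cancel hm₁dvd
  have hslt : s < m := Nat.div_lt_self (by omega) hm₁p.one_lt
  have h2m₁ : 2 ≤ m₁ := hm₁p.two_le
  have hq2 : 2 ≤ q := aux_q2 hq
  -- K facts
  haveI : Finite K := (aux_fixed_finite σ hq hσ s hs_pos).to_subtype
  haveI : FiniteDimensional F K := Module.Finite.of_finite
  haveI := Fintype.ofFinite K
  have hKrank : Module.finrank F K = s := aux_fixed_finrank σ hq hσ s hs_pos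
  have hcardK : Fintype.card K = q ^ s := by
    rw [← hq, ← hKrank]; exact Module.card_eq_pow_finrank
  -- a root of f
  have hfdeg : f.degree ≠ 0 := by
    have hd : f.degree = (m₁ : WithBot ℕ) := by
      rw [Polynomial.degree_eq_natDegree hfm.ne_zero, hfd]
    rw [hd]
    exact_mod_cast (by omega : m₁ ≠ 0)
  obtain ⟨α, hα⟩ := IsAlgClosed.exists_aeval_eq_zero (AlgebraicClosure F) f hfdeg
  have hmin : minpoly K α = f := (minpoly.eq_of_irreducible_of_monic hfi hα hfm).symm
  have hαint : IsIntegral K α := ⟨f, hfm, hα⟩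
  haveI : FiniteDimensional K K⟮α⟯ := IntermediateField.adjoin.finiteDimensional hαint
  have hrankKα : Module.finrank K K⟮α⟯ = m₁ := by
    rw [IntermediateField.adjoin.finrank hαint, hmin, hfd]
  haveI : Finite K⟮α⟯ := Module.finite_of_finite K
  haveI := Fintype.ofFinite K⟮α⟯
  have hcardKα : Fintype.card K⟮α⟯ = q ^ m := by
    have h1 : Fintype.card K⟮α⟯ = Fintype.card K ^ Module.finrank K K⟮α⟯ :=
      Module.card_eq_pow_finrank
    rw [h1, hcardK, hrankKα, ← pow_mul, hsm]
  have hαm : α ^ q ^ m = α := by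
    have h1 : (IntermediateField.AdjoinSimple.gen K α) ^ q ^ m
        = IntermediateField.AdjoinSimple.gen K α := by
      rw [← hcardKα]; exact FiniteField.pow_card _
    have h2 := congrArg (algebraMap K⟮α⟯ (AlgebraicClosure F)) h1
    rwa [map_pow, IntermediateField.AdjoinSimple.algebraMap_gen] at h2
  choose a ha using hcoeff
  have hgsum : ∀ x : AlgebraicClosure F,
      (∑ i ∈ Finset.range (m₁ + 1), algebraMap F (AlgebraicClosure F) (a i) * x ^ i)
        = Polynomial.eval x
          ((f - Polynomial.C (f.eval 0)).map (algebraMap K (AlgebraicClosure F))) := by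
    intro x
    have hdeg : ((f - Polynomial.C (f.eval 0)).map
        (algebraMap K (AlgebraicClosure F))).natDegree < m₁ + 1 := by
      apply Nat.lt_succ_of_le
      refine le_trans Polynomial.natDegree_map_le ?_
      refine le_trans (Polynomial.natDegree_sub_le _ _) ?_
      simp [hfd]
    rw [Polynomial.eval_eq_sum_range' hdeg]
    refine Finset.sum_congr rfl fun i _ => ?_
    rw [Polynomial.coeff_map, ← ha i]
    rfl
  have hgα : (∑ i ∈ Finset.range (m₁ + 1), algebraMap F (AlgebraicClosure F) (a i) * α ^ i)
      = - ((f.eval 0 : K) : AlgebraicClosure F) := by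
    rw [hgsum α, Polynomial.map_sub, Polynomial.eval_sub, Polynomial.map_C, Polynomial.eval_C]
    have h0 : Polynomial.eval α (f.map (algebraMap K (AlgebraicClosure F))) = 0 := by
      rw [Polynomial.eval_map, ← Polynomial.aeval_def]; exact hα
    rw [h0, zero_sub]
    rfl
  have hf0rank : Module.finrank F F⟮((f.eval 0 : K) : AlgebraicClosure F)⟯ = s :=
    (aux_Fcal_iff σ hq hσ _ s hs_pos).mp hf0
  have hf0mem : ((f.eval 0 : K) : AlgebraicClosure F) ∈ F⟮α⟯ := by
    rw [← neg_neg ((f.eval 0 : K) : AlgebraicClosure F), ← hgα]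
    exact neg_mem (sum_mem fun i _ => mul_mem (IntermediateField.algebraMap_mem _ _)
      (pow_mem (IntermediateField.mem_adjoin_simple_self F α) i))
  have hαintF : IsIntegral F α := Algebra.IsIntegral.isIntegral α
  haveI : FiniteDimensional F F⟮α⟯ := IntermediateField.adjoin.finiteDimensional hαintF
  have hsd : s ∣ Module.finrank F F⟮α⟯ := by
    rw [← hf0rank]
    exact aux_finrank_dvd (IntermediateField.adjoin_simple_le_iff.mpr hf0mem)
  have hdm : Module.finrank F F⟮α⟯ ∣ m := (aux_pow_iff σ hq hσ α m).mp hαm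
  have hdne : Module.finrank F F⟮α⟯ ≠ s := by
    intro hds
    have heq : F⟮((f.eval 0 : K) : AlgebraicClosure F)⟯ = F⟮α⟯ :=
      IntermediateField.eq_of_le_of_finrank_eq
        (IntermediateField.adjoin_simple_le_iff.mpr hf0mem) (by rw [hf0rank, hds])
    have hαK : α ∈ K := by
      have h1 : α ∈ F⟮((f.eval 0 : K) : AlgebraicClosure F)⟯ := by
        rw [heq]; exact IntermediateField.mem_adjoin_simple_self F α
      exact (IntermediateField.adjoin_simple_le_iff.mpr (f.eval 0).2) h1
    have hXC : minpoly K α = X - Polynomial.C (⟨α, hαK⟩ : K) := by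
      have hrfl : α = algebraMap K (AlgebraicClosure F) (⟨α, hαK⟩ : K) := rfl
      conv_lhs => rw [hrfl]
      exact minpoly.eq_X_sub_C _ _
    have hnd := congrArg Polynomial.natDegree hXC
    rw [hmin, hfd, Polynomial.natDegree_X_sub_C] at hnd
    omega
  have hdm' : Module.finrank F F⟮α⟯ = m := by
    obtain ⟨e, he⟩ := hsd
    have hem : s * e ∣ s * m₁ := by rw [← he, hsm]; exact hdm
    have he' : e ∣ m₁ := (Nat.mul_dvd_mul_iff_left hs_pos).mp hem
    rcases (Nat.Prime.eq_one_or_self_of_dvd hm₁p e he') with rfl | rfl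
    · exfalso; apply hdne; omega
    · rw [he, hsm]
  have hαF : α ∈ (Fcal q m : Set (AlgebraicClosure F)) :=
    (aux_Fcal_iff σ hq hσ α m (by omega)).mpr hdm'
  obtain ⟨β, hβ⟩ := aux_exists_gen σ hq hσ n (by omega)
  have hβF : β ∈ (Fcal q n : Set (AlgebraicClosure F)) :=
    (aux_Fcal_iff σ hq hσ β n (by omega)).mpr hβ
  have ham₁ : a m₁ = 1 := by
    have h1 : ((f - Polynomial.C (f.eval 0)).coeff m₁ : K) = 1 := by
      rw [Polynomial.coeff_sub, Polynomial.coeff_C, if_neg (by omega : ¬ m₁ = 0), sub_zero]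
      have h2 := hfm.coeff_natDegree
      rwa [hfd] at h2
    have h3 := ha m₁
    rw [h1] at h3
    have h2 : ((1 : K) : AlgebraicClosure F) = algebraMap F (AlgebraicClosure F) 1 := by simp
    rw [h2] at h3
    exact ((algebraMap F (AlgebraicClosure F)).injective h3).symm
  set φ : MvPolynomial (Fin 2) F := (∑ i ∈ Finset.range (m₁ + 1),
      MvPolynomial.monomial (Finsupp.single (0 : Fin 2) i) (a i))
      + MvPolynomial.monomial (Finsupp.single (1 : Fin 2) 1) (1 : F) with hφ
  have hcoeffm₁ : MvPolynomial.coeff (Finsupp.single (0 : Fin 2) m₁) φ = 1 := by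
    rw [hφ, MvPolynomial.coeff_add, MvPolynomial.coeff_sum]
    rw [Finset.sum_eq_single m₁ (fun i _ hi => by
        rw [MvPolynomial.coeff_monomial, if_neg]
        intro hsg
        exact hi (by simpa using congrArg (fun g => g (0 : Fin 2)) hsg))
      (fun hmem => absurd (Finset.self_mem_range_succ m₁) hmem)]
    rw [MvPolynomial.coeff_monomial, if_pos rfl, ham₁]
    rw [MvPolynomial.coeff_monomial, if_neg, add_zero]
    intro hsg
    have := congrArg (fun g => g (1 : Fin 2)) hsg
    simp [Finsupp.single_apply] at this
  have hcoeffy : MvPolynomial.coeff (Finsupp.single (1 : Fin 2) 1) φ = 1 := by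
    rw [hφ, MvPolynomial.coeff_add, MvPolynomial.coeff_sum]
    rw [Finset.sum_eq_zero (fun i _ => by
        rw [MvPolynomial.coeff_monomial, if_neg]
        intro hsg
        have := congrArg (fun g => g (1 : Fin 2)) hsg
        simp [Finsupp.single_apply] at this)]
    rw [MvPolynomial.coeff_monomial, if_pos rfl, zero_add]
  have hsupp : ∀ mono ∈ φ.support, mono 0 ≤ m₁ ∧ mono 1 ≤ 1 := by
    intro mono hmono
    by_contra hcon
    apply MvPolynomial.mem_support_iff.mp hmono
    rw [hφ, MvPolynomial.coeff_add, MvPolynomial.coeff_sum]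
    rw [Finset.sum_eq_zero (fun i hi => by
        rw [MvPolynomial.coeff_monomial, if_neg]
        intro hsg
        have h0 := congrArg (fun g => g (0 : Fin 2)) hsg
        have h1 := congrArg (fun g => g (1 : Fin 2)) hsg
        simp [Finsupp.single_apply] at h0 h1
        have : i ≤ m₁ := by
          have := Finset.mem_range.mp hi; omega
        omega)]
    rw [MvPolynomial.coeff_monomial, if_neg, add_zero]
    intro hsg
    have h0 := congrArg (fun g => g (0 : Fin 2)) hsg
    have h1 := congrArg (fun g => g (1 : Fin 2)) hsg
    simp [Finsupp.single_apply] at h0 h1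
    omega
  have hdeg0 : φ.degreeOf 0 = m₁ := by
    apply le_antisymm
    · rw [MvPolynomial.degreeOf_le_iff]
      exact fun mono hmono => (hsupp mono hmono).1
    · have hmem : Finsupp.single (0 : Fin 2) m₁ ∈ φ.support := by
        rw [MvPolynomial.mem_support_iff, hcoeffm₁]; exact one_ne_zero
      have := MvPolynomial.monomial_le_degreeOf 0 hmem
      simpa using this
  have hdeg1 : φ.degreeOf 1 = 1 := by
    apply le_antisymm
    · rw [MvPolynomial.degreeOf_le_iff]
      exact fun mono hmono => (hsupp mono hmono).2
    · have hmem : Finsupp.single (1 : Fin 2) 1 ∈ φ.support := by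
        rw [MvPolynomial.mem_support_iff, hcoeffy]; exact one_ne_zero
      have := MvPolynomial.monomial_le_degreeOf 1 hmem
      simpa using this
  have hn₁2 : 2 ≤ n₁ := hn₁ ▸ (Nat.minFac_prime (by omega : n ≠ 1)).two_le
  have haev : ∀ x y : AlgebraicClosure F, MvPolynomial.aeval ![x, y] φ
      = (∑ i ∈ Finset.range (m₁ + 1), algebraMap F (AlgebraicClosure F) (a i) * x ^ i) + y := by
    intro x y
    rw [hφ, map_add, map_sum]
    simp [MvPolynomial.aeval_monomial, Finsupp.prod_single_index]
  refine ⟨φ, hdeg0, by omega, by omega, (s : ℤ), α, hαF, ?_, β, hβF, ?_⟩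
  · intro hcon
    rw [zpow_natCast, aux_pow_apply σ hσ] at hcon
    have hd := (aux_pow_iff σ hq hσ α s).mp hcon
    rw [hdm'] at hd
    have := Nat.le_of_dvd hs_pos hd
    omega
  · rw [haev, haev]
    congr 1
    have hz : (σ ^ (s : ℤ)) α = (σ ^ s) α := by rw [zpow_natCast]
    have hfix : (σ ^ s) (∑ i ∈ Finset.range (m₁ + 1),
          algebraMap F (AlgebraicClosure F) (a i) * α ^ i)
        = ∑ i ∈ Finset.range (m₁ + 1),
          algebraMap F (AlgebraicClosure F) (a i) * ((σ ^ s) α) ^ i := by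
      rw [map_sum]
      refine Finset.sum_congr rfl fun i _ => ?_
      rw [map_mul, map_pow, AlgEquiv.commutes]
    rw [hz, ← hfix, hgα, map_neg, aux_pow_apply σ hσ, hf0.1, ← hgα]
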